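/- For a given I₀-graded space W with finite total dimension, there are only finitely many isomorphism classes of I₁-graded spaces V such that the pair (V, W) is l-dominant. -/

import Mathlib

open scoped BigOperators

section aux
variable {I : Type} [Fintype I] [DecidableEq I]
set_option linter.unusedSectionVars false

noncomputable def qR (aC : I → I → ℤ) (x : I → ℝ) : ℝ := ∑ i, ∑ j, (aC i j : ℝ) * x i * x j

lemma qR_continuous (aC : I → I → ℤ) : Continuous (qR aC) := by
  unfold qR; fun_prop

lemma qR_nonneg (aC : I → I → ℤ)
    (hpos : ∀ v : I → ℚ, v ≠ 0 → 0 < ∑ i, ∑ j, (aC i j : ℚ) * v i * v j)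
    (x : I → ℝ) : 0 ≤ qR aC x := by
  have hclosed : IsClosed {x : I → ℝ | 0 ≤ qR aC x} :=
    isClosed_le continuous_const (qR_continuous aC)
  have hsub : (Set.univ.pi fun _ : I => Set.range ((↑) : ℚ → ℝ)) ⊆ {x : I → ℝ | 0 ≤ qR aC x} := by
    intro x hx
    choose v hv using fun i => hx i (Set.mem_univ i)
    have hx' : x = fun i => ((v i : ℝ)) := by
      funext i; exact (hv i).symm
    subst hx'
    have : qR aC (fun i => ((v i : ℝ))) = ((∑ i, ∑ j, (aC i j : ℚ) * v i * v j : ℚ) : ℝ) := by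
      unfold qR; push_cast; ring_nf
    rw [Set.mem_setOf_eq, this]
    rcases eq_or_ne v 0 with h | h
    · simp [h]
    · exact_mod_cast (hpos v h).le
  have hdense : Dense (Set.univ.pi fun _ : I => Set.range ((↑) : ℚ → ℝ)) :=
    dense_pi Set.univ fun i _ => Rat.denseRange_cast
  have : Dense {x : I → ℝ | 0 ≤ qR aC x} := hdense.mono hsub
  have huniv : {x : I → ℝ | 0 ≤ qR aC x} = Set.univ := hclosed.closure_eq ▸ this.closure_eq
  have hx : x ∈ {x : I → ℝ | 0 ≤ qR aC x} := huniv ▸ Set.mem_univ x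
  exact hx

lemma exists_eps (aC : I → I → ℤ) [Nonempty I]
    (hsym : ∀ i j, aC i j = aC j i)
    (hpos : ∀ v : I → ℚ, v ≠ 0 → 0 < ∑ i, ∑ j, (aC i j : ℚ) * v i * v j) :
    ∃ ε : ℝ, 0 < ε ∧ ∀ x ∈ stdSimplex ℝ I, ε ≤ qR aC x := by
  obtain ⟨u, hu, hmin⟩ := (isCompact_stdSimplex ℝ I).exists_isMinOn
    ⟨_, single_mem_stdSimplex ℝ (Classical.arbitrary I)⟩ (qR_continuous aC).continuousOn
  refine ⟨qR aC u, ?_, hmin⟩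
  rcases (qR_nonneg aC hpos u).lt_or_eq with h | h
  · exact h
  exfalso
  have hq0 : qR aC u = 0 := h.symm
  have expand : ∀ (t : ℝ) (y : I → ℝ), qR aC (u + t • y)
      = qR aC u + t * (∑ i, ∑ j, (aC i j : ℝ) * (u i * y j + y i * u j)) + t^2 * qR aC y := by
    intro t y
    unfold qR
    rw [Finset.mul_sum, Finset.mul_sum, ← Finset.sum_add_distrib, ← Finset.sum_add_distrib]
    refine Finset.sum_congr rfl fun i _ => ?_
    rw [Finset.mul_sum, Finset.mul_sum, ← Finset.sum_add_distrib, ← Finset.sum_add_distrib]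
    refine Finset.sum_congr rfl fun j _ => ?_
    simp only [Pi.add_apply, Pi.smul_apply, smul_eq_mul]
    ring
  have key : ∀ (t : ℝ) (y : I → ℝ),
      0 ≤ t * (∑ i, ∑ j, (aC i j : ℝ) * (u i * y j + y i * u j)) + t^2 * qR aC y := by
    intro t y
    have := qR_nonneg aC hpos (u + t • y)
    rw [expand t y, hq0, zero_add] at this
    exact this
  have hB : ∀ y : I → ℝ, (∑ i, ∑ j, (aC i j : ℝ) * (u i * y j + y i * u j)) = 0 := by
    intro y
    set b := (∑ i, ∑ j, (aC i j : ℝ) * (u i * y j + y i * u j)) with hbdef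
    set c := qR aC y with hcdef
    have hc0 : 0 ≤ c := qR_nonneg aC hpos y
    by_contra hb
    have hcpos : (0:ℝ) < c + 1 := by linarith
    have h1 := key (-b/(c+1)) y
    rw [← hbdef, ← hcdef] at h1
    have h2 : (0:ℝ) ≤ (-b/(c+1)*b + (-b/(c+1))^2*c) * (c+1)^2 :=
      mul_nonneg h1 (by positivity)
    have h3 : (-b/(c+1)*b + (-b/(c+1))^2*c) * (c+1)^2 = -(b^2)*(c+1) + b^2*c := by
      field_simp
    rw [h3] at h2
    have hb2 : 0 < b^2 := lt_of_le_of_ne (sq_nonneg b) (Ne.symm (pow_ne_zero 2 hb))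
    nlinarith
  have hmv : ∀ k, (∑ j, (aC k j : ℝ) * u j) = 0 := by
    intro k
    have h1 := hB (Pi.single k 1)
    have h2 : (∑ i, ∑ j, (aC i j : ℝ) * (u i * (Pi.single k 1 : I → ℝ) j
        + (Pi.single k 1 : I → ℝ) i * u j)) = 2 * ∑ j, (aC k j : ℝ) * u j := by
      have step : ∀ i j : I, (aC i j : ℝ) * (u i * (Pi.single k 1 : I → ℝ) j
          + (Pi.single k 1 : I → ℝ) i * u j)
          = (if j = k then (aC i j : ℝ) * u i else 0)
            + (if i = k then (aC i j : ℝ) * u j else 0) := by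
        intro i j
        by_cases hj : j = k <;> by_cases hi : i = k <;>
          simp [hj, hi, Pi.single_apply] <;> ring
      simp only [step, Finset.sum_add_distrib, Finset.sum_ite_eq' Finset.univ,
        Finset.mem_univ, if_true]
      have pull : ∀ x : I, (∑ x1, if x = k then (aC x x1 : ℝ) * u x1 else 0)
          = if x = k then ∑ x1, (aC x x1 : ℝ) * u x1 else 0 := by
        intro x; split <;> simp
      simp only [pull, Finset.sum_ite_eq' Finset.univ, Finset.mem_univ, if_true]
      rw [two_mul]
      congr 1
      exact Finset.sum_congr rfl fun i _ => by rw [hsym]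
    rw [h2] at h1
    linarith
  -- contradiction with rational positive definiteness
  set M : Matrix I I ℚ := Matrix.of (fun i j => (aC i j : ℚ)) with hM
  have hu0 : u ≠ 0 := by
    intro h0
    have h1 := hu.2
    rw [h0] at h1
    simp at h1
  have hmvR : (M.map (Rat.castHom ℝ)).mulVec u = 0 := by
    funext k
    simpa [hM, Matrix.mulVec, dotProduct] using hmv k
  have hdetR : (M.map (Rat.castHom ℝ)).det = 0 :=
    Matrix.exists_mulVec_eq_zero_iff.mp ⟨u, hu0, hmvR⟩
  have hdetQ : M.det = 0 := by
    have hmd := RingHom.map_det (Rat.castHom ℝ) M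
    have hmm : ((Rat.castHom ℝ).mapMatrix M) = M.map (Rat.castHom ℝ) := rfl
    rw [hmm, hdetR] at hmd
    have : ((M.det : ℚ) : ℝ) = 0 := hmd
    exact_mod_cast this
  obtain ⟨v, hv0, hvz⟩ := Matrix.exists_mulVec_eq_zero_iff.mpr hdetQ
  have hq := hpos v hv0
  have heq : (∑ i, ∑ j, (aC i j : ℚ) * v i * v j) = ∑ i, v i * (M.mulVec v i) := by
    refine Finset.sum_congr rfl fun i _ => ?_
    rw [Matrix.mulVec, dotProduct, Finset.mul_sum]
    exact Finset.sum_congr rfl fun j _ => by simp [hM]; ring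
  rw [heq, hvz] at hq
  simp at hq

lemma key_bound (aC : I → I → ℤ)
    (hsym : ∀ i j, aC i j = aC j i)
    (hpos : ∀ v : I → ℚ, v ≠ 0 → 0 < ∑ i, ∑ j, (aC i j : ℚ) * v i * v j)
    (w : I → ℕ) :
    ∃ B : ℕ, ∀ v : I → ℕ, (∀ i, (∑ j, aC i j * (v j : ℤ)) ≤ (w i : ℤ)) →
      ∀ i, v i ≤ B := by
  cases isEmpty_or_nonempty I with
  | inl hempty => exact ⟨0, fun v _ i => (IsEmpty.elim hempty i)⟩
  | inr hne =>
  obtain ⟨ε, hε, hεle⟩ := exists_eps aC hsym hpos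
  refine ⟨⌊(∑ i, (w i : ℝ)) / ε⌋₊, fun v hv i => ?_⟩
  set m : ℕ := ∑ i, v i with hm
  have hvle : ∀ j, v j ≤ m :=
    fun j => Finset.single_le_sum (fun _ _ => Nat.zero_le _) (Finset.mem_univ j)
  rcases Nat.eq_zero_or_pos m with h0 | hmp
  · have := hvle i
    omega
  have hmR : (0:ℝ) < m := by exact_mod_cast hmp
  have hmsum : (∑ j, (v j : ℝ)) = (m : ℝ) := by
    rw [hm]; push_cast; rfl
  have husimplex : (fun j => (v j : ℝ) / m) ∈ stdSimplex ℝ I := by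
    refine ⟨fun j => by positivity, ?_⟩
    rw [← Finset.sum_div, hmsum, div_self (ne_of_gt hmR)]
  have h1 : ε ≤ qR aC (fun j => (v j : ℝ) / m) := hεle _ husimplex
  have h2 : qR aC (fun j => (v j : ℝ) / m) = qR aC (fun j => (v j : ℝ)) / ((m:ℝ) * m) := by
    unfold qR
    rw [Finset.sum_div]
    refine Finset.sum_congr rfl fun a _ => ?_
    rw [Finset.sum_div]
    refine Finset.sum_congr rfl fun b _ => ?_
    field_simp
    try ring
  have h3 : qR aC (fun j => (v j : ℝ)) ≤ (m : ℝ) * ∑ j, (w j : ℝ) := by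
    unfold qR
    calc ∑ a, ∑ b, (aC a b : ℝ) * (v a : ℝ) * (v b : ℝ)
        = ∑ a, (v a : ℝ) * ∑ b, (aC a b : ℝ) * (v b : ℝ) := by
          refine Finset.sum_congr rfl fun a _ => ?_
          rw [Finset.mul_sum]
          exact Finset.sum_congr rfl fun b _ => by ring
      _ ≤ ∑ a, (v a : ℝ) * (w a : ℝ) := by
          refine Finset.sum_le_sum fun a _ => ?_
          have hc : (∑ b, (aC a b : ℝ) * (v b : ℝ)) ≤ (w a : ℝ) := by
            exact_mod_cast hv a
          exact mul_le_mul_of_nonneg_left hc (by positivity)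
      _ ≤ ∑ a, (m : ℝ) * (w a : ℝ) := by
          refine Finset.sum_le_sum fun a _ => ?_
          have : (v a : ℝ) ≤ (m : ℝ) := by exact_mod_cast hvle a
          exact mul_le_mul_of_nonneg_right this (by positivity)
      _ = (m : ℝ) * ∑ a, (w a : ℝ) := by rw [Finset.mul_sum]
  rw [h2] at h1
  have h5 : ε * ((m:ℝ) * m) ≤ qR aC (fun j => (v j : ℝ)) :=
    (le_div_iff₀ (mul_pos hmR hmR)).mp h1
  have h4 : ε * m ≤ ∑ j, (w j : ℝ) := by
    have hh : (ε * m) * m ≤ (∑ j, (w j : ℝ)) * m := by nlinarith [h5, h3]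
    exact le_of_mul_le_mul_right hh hmR
  have h6 : (m : ℝ) ≤ (∑ j, (w j : ℝ)) / ε := by
    rw [le_div_iff₀ hε]
    linarith [h4]
  have h7 : m ≤ ⌊(∑ j, (w j : ℝ)) / ε⌋₊ := Nat.le_floor h6
  exact le_trans (hvle i) h7

end aux





/-- For a fixed `Î₀`-graded space `W` (encoded by its dimension function, a finitely
supported function on `I × ℤ` respecting the parity `ξ`), there are only finitely many
isomorphism classes of `Î₁`-graded spaces `V` (encoded likewise, with the opposite
parity) such that the pair `(V, W)` is l-dominant, i.e.
`dim W_i(r) − dim V_i(r+1) − dim V_i(r−1) − ∑_{j≠i} a_{ij} dim V_j(r) ≥ 0`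
for all `(i,r) ∈ Î₀`.  Here `aC` is the Cartan matrix of a simply-laced simple Lie
algebra: symmetric, `2` on the diagonal, entries in `{0,-1}` off the diagonal, and
positive definite; `ξ` is a bipartition of the Dynkin diagram. -/
theorem finitely_many_lDominant_V
    {I : Type} [Fintype I] [DecidableEq I] (aC : I → I → ℤ)
    (hsym : ∀ i j, aC i j = aC j i)
    (hdiag : ∀ i, aC i i = 2)
    (hoff : ∀ i j, i ≠ j → aC i j = 0 ∨ aC i j = -1)
    (hposdef : ∀ v : I → ℚ, v ≠ 0 → 0 < ∑ i, ∑ j, (aC i j : ℚ) * v i * v j)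
    (ξ : I → ZMod 2)
    (hbip : ∀ i j, i ≠ j → aC i j ≠ 0 → ξ j = ξ i + 1)
    (W : (I × ℤ) →₀ ℕ)
    (hW : ∀ p ∈ W.support, ((p.2 : ZMod 2) = ξ p.1)) :
    {V : (I × ℤ) →₀ ℕ |
        (∀ p ∈ V.support, ((p.2 : ZMod 2) = ξ p.1 + 1)) ∧
        ∀ (i : I) (r : ℤ), ((r : ZMod 2) = ξ i) →
          0 ≤ (W (i, r) : ℤ) - (V (i, r + 1) : ℤ) - (V (i, r - 1) : ℤ)
              - ∑ j ∈ Finset.univ.erase i, aC i j * (V (j, r) : ℤ)}.Finite := by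
  classical
  set D : Finset ℤ := W.support.image Prod.snd with hDdef
  have char2 : ∀ a : ZMod 2, a + 1 + 1 = a := by decide
  -- Claim A: the support of any admissible V is sandwiched between elements of D
  have claimA : ∀ V : (I × ℤ) →₀ ℕ,
      (∀ p ∈ V.support, ((p.2 : ZMod 2) = ξ p.1 + 1)) →
      (∀ (i : I) (r : ℤ), ((r : ZMod 2) = ξ i) →
          0 ≤ (W (i, r) : ℤ) - (V (i, r + 1) : ℤ) - (V (i, r - 1) : ℤ)
              - ∑ j ∈ Finset.univ.erase i, aC i j * (V (j, r) : ℤ)) →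
      ∀ p ∈ V.support, ∃ s1 ∈ D, ∃ s2 ∈ D, s2 + 1 ≤ p.2 ∧ p.2 ≤ s1 - 1 := by
    intro V hV1 hV2 p hp
    have hSV : (V.support.image Prod.snd).Nonempty := ⟨p.2, Finset.mem_image_of_mem _ hp⟩
    set SV := V.support.image Prod.snd with hSVdef
    -- top part
    obtain ⟨q, hq, hq2⟩ := Finset.mem_image.mp (SV.max'_mem hSV)
    set rtop := SV.max' hSV with hrtop
    have hqmem : (q.1, rtop) ∈ V.support := by rw [← hq2]; exact hq
    have hpar : ((rtop : ℤ) : ZMod 2) = ξ q.1 + 1 := hV1 (q.1, rtop) hqmem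
    have hpar2 : (((rtop + 1 : ℤ)) : ZMod 2) = ξ q.1 := by
      push_cast
      rw [hpar]
      exact char2 _
    have hz : ∀ (j : I) (s : ℤ), rtop < s → V (j, s) = 0 := by
      intro j s hs
      by_contra h0
      have hm : (j, s) ∈ V.support := Finsupp.mem_support_iff.mpr h0
      have hm2 : s ∈ SV := Finset.mem_image_of_mem _ hm
      have := SV.le_max' s hm2
      omega
    have hineq := hV2 q.1 (rtop + 1) hpar2
    rw [hz q.1 (rtop + 1 + 1) (by omega)] at hineq
    have hsz : ∑ j ∈ Finset.univ.erase q.1, aC q.1 j * (V (j, rtop + 1) : ℤ) = 0 := by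
      refine Finset.sum_eq_zero fun j _ => ?_
      rw [hz j (rtop + 1) (by omega)]
      ring
    rw [hsz] at hineq
    have hidx : rtop + 1 - 1 = rtop := by ring
    rw [hidx] at hineq
    have hVpos : 0 < V (q.1, rtop) := Nat.pos_of_ne_zero (Finsupp.mem_support_iff.mp hqmem)
    have hWpos : 0 < W (q.1, rtop + 1) := by
      by_contra h
      push_neg at h
      interval_cases h' : W (q.1, rtop + 1)
      · simp only [h', Nat.cast_zero] at hineq
        omega
    have hWs1 : (q.1, rtop + 1) ∈ W.support := Finsupp.mem_support_iff.mpr (by omega)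
    have hs1 : (rtop + 1) ∈ D := by
      rw [hDdef]
      exact Finset.mem_image_of_mem Prod.snd hWs1
    -- bottom part
    obtain ⟨q', hq', hq'2⟩ := Finset.mem_image.mp (SV.min'_mem hSV)
    set rbot := SV.min' hSV with hrbot
    have hq'mem : (q'.1, rbot) ∈ V.support := by rw [← hq'2]; exact hq'
    have hpar' : ((rbot : ℤ) : ZMod 2) = ξ q'.1 + 1 := hV1 (q'.1, rbot) hq'mem
    have hpar'2 : (((rbot - 1 : ℤ)) : ZMod 2) = ξ q'.1 := by
      push_cast
      rw [hpar']
      ring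
    have hz' : ∀ (j : I) (s : ℤ), s < rbot → V (j, s) = 0 := by
      intro j s hs
      by_contra h0
      have hm : (j, s) ∈ V.support := Finsupp.mem_support_iff.mpr h0
      have hm2 : s ∈ SV := Finset.mem_image_of_mem _ hm
      have := SV.min'_le s hm2
      omega
    have hineq' := hV2 q'.1 (rbot - 1) hpar'2
    rw [hz' q'.1 (rbot - 1 - 1) (by omega)] at hineq'
    have hsz' : ∑ j ∈ Finset.univ.erase q'.1, aC q'.1 j * (V (j, rbot - 1) : ℤ) = 0 := by
      refine Finset.sum_eq_zero fun j _ => ?_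
      rw [hz' j (rbot - 1) (by omega)]
      ring
    rw [hsz'] at hineq'
    have hidx' : rbot - 1 + 1 = rbot := by ring
    rw [hidx'] at hineq'
    have hVpos' : 0 < V (q'.1, rbot) := Nat.pos_of_ne_zero (Finsupp.mem_support_iff.mp hq'mem)
    have hWpos' : 0 < W (q'.1, rbot - 1) := by
      by_contra h
      push_neg at h
      interval_cases h' : W (q'.1, rbot - 1)
      · simp only [h', Nat.cast_zero] at hineq'
        omega
    have hWs2 : (q'.1, rbot - 1) ∈ W.support := Finsupp.mem_support_iff.mpr (by omega)
    have hs2 : (rbot - 1) ∈ D := by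
      rw [hDdef]
      exact Finset.mem_image_of_mem Prod.snd hWs2
    refine ⟨rtop + 1, hs1, rbot - 1, hs2, ?_, ?_⟩
    · have : rbot ≤ p.2 := SV.min'_le p.2 (Finset.mem_image_of_mem _ hp)
      omega
    · have : p.2 ≤ rtop := SV.le_max' p.2 (Finset.mem_image_of_mem _ hp)
      omega
  rcases D.eq_empty_or_nonempty with hDe | hDne
  · apply Set.Finite.subset (Set.finite_singleton (0 : (I × ℤ) →₀ ℕ))
    rintro V ⟨hV1, hV2⟩
    have hsupp : V.support = ∅ := by
      by_contra h
      obtain ⟨p, hp⟩ := Finset.nonempty_of_ne_empty h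
      obtain ⟨s1, hs1, -⟩ := claimA V hV1 hV2 p hp
      rw [hDe] at hs1
      exact absurd hs1 (Finset.notMem_empty _)
    simp only [Set.mem_singleton_iff]
    exact Finsupp.support_eq_empty.mp hsupp
  · set lo := D.min' hDne with hlo
    set hi := D.max' hDne with hhi
    set bigSet : Finset ℤ := Finset.Icc (lo - 2) (hi + 2) with hbigSet
    set w' : I → ℕ := fun i => ∑ r ∈ bigSet, W (i, r) with hw'
    obtain ⟨B, hB⟩ := key_bound aC hsym hposdef w'
    set N : (I × ℤ) →₀ ℕ := Finsupp.indicator (Finset.univ ×ˢ bigSet) (fun _ _ => B) with hN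
    apply Set.Finite.subset (Set.finite_Icc (0 : (I × ℤ) →₀ ℕ) N)
    rintro V ⟨hV1, hV2⟩
    have hwin : ∀ p ∈ V.support, lo + 1 ≤ p.2 ∧ p.2 ≤ hi - 1 := by
      intro p hp
      obtain ⟨s1, hs1, s2, hs2, h1, h2⟩ := claimA V hV1 hV2 p hp
      have := D.min'_le s2 hs2
      have := D.le_max' s1 hs1
      omega
    set R : I → Finset ℤ := fun i => (Finset.Icc lo hi).filter (fun r => ((r : ZMod 2) = ξ i)) with hR
    have hsub : ∀ i, R i ⊆ bigSet := by
      intro i r hr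
      simp only [hR, Finset.mem_filter, Finset.mem_Icc] at hr
      simp only [hbigSet, Finset.mem_Icc]
      omega
    set vtot : I → ℕ := fun i => ∑ r ∈ bigSet, V (i, r) with hvtot
    have e1n : ∀ i, ∑ r ∈ R i, W (i, r) = w' i := by
      intro i
      refine Finset.sum_subset (hsub i) ?_
      intro r hrbig hrnot
      by_contra h0
      have hm : (i, r) ∈ W.support := Finsupp.mem_support_iff.mpr h0
      have hrD : r ∈ D := Finset.mem_image_of_mem Prod.snd hm
      have hpar : ((r : ℤ) : ZMod 2) = ξ i := hW _ hm
      have h1 := D.min'_le r hrD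
      have h2 := D.le_max' r hrD
      refine hrnot ?_
      simp only [hR, Finset.mem_filter, Finset.mem_Icc]
      exact ⟨⟨h1, h2⟩, hpar⟩
    have e2n : ∀ i, ∑ r ∈ R i, V (i, r + 1) = vtot i := by
      intro i
      have himg : ∑ r ∈ R i, V (i, r + 1) = ∑ s ∈ (R i).image (· + 1), V (i, s) := by
        rw [Finset.sum_image]
        intro x _ y _ h
        have h' : x + 1 = y + 1 := h
        omega
      rw [himg, hvtot]
      refine Finset.sum_subset ?_ ?_
      · intro s hs
        simp only [Finset.mem_image, hR, Finset.mem_filter, Finset.mem_Icc] at hs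
        obtain ⟨r, ⟨⟨hr1, hr2⟩, -⟩, rfl⟩ := hs
        simp only [hbigSet, Finset.mem_Icc]
        omega
      · intro s hsbig hsnot
        by_contra h0
        have hm : (i, s) ∈ V.support := Finsupp.mem_support_iff.mpr h0
        have hw2 := hwin _ hm
        have hpar' : ((s : ℤ) : ZMod 2) = ξ i + 1 := hV1 _ hm
        refine hsnot ?_
        simp only [Finset.mem_image, hR, Finset.mem_filter, Finset.mem_Icc]
        refine ⟨s - 1, ⟨⟨by omega, by omega⟩, ?_⟩, by omega⟩
        push_cast
        rw [hpar']
        ring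
    have e3n : ∀ i, ∑ r ∈ R i, V (i, r - 1) = vtot i := by
      intro i
      have himg : ∑ r ∈ R i, V (i, r - 1) = ∑ s ∈ (R i).image (· - 1), V (i, s) := by
        rw [Finset.sum_image]
        intro x _ y _ h
        have h' : x - 1 = y - 1 := h
        omega
      rw [himg, hvtot]
      refine Finset.sum_subset ?_ ?_
      · intro s hs
        simp only [Finset.mem_image, hR, Finset.mem_filter, Finset.mem_Icc] at hs
        obtain ⟨r, ⟨⟨hr1, hr2⟩, -⟩, rfl⟩ := hs
        simp only [hbigSet, Finset.mem_Icc]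
        omega
      · intro s hsbig hsnot
        by_contra h0
        have hm : (i, s) ∈ V.support := Finsupp.mem_support_iff.mpr h0
        have hw2 := hwin _ hm
        have hpar' : ((s : ℤ) : ZMod 2) = ξ i + 1 := hV1 _ hm
        refine hsnot ?_
        simp only [Finset.mem_image, hR, Finset.mem_filter, Finset.mem_Icc]
        refine ⟨s + 1, ⟨⟨by omega, by omega⟩, ?_⟩, by omega⟩
        push_cast
        rw [hpar']
        exact char2 _
    have e4n : ∀ i j, i ≠ j → aC i j ≠ 0 → ∑ r ∈ R i, V (j, r) = vtot j := by
      intro i j hij ha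
      rw [hvtot]
      refine Finset.sum_subset (hsub i) ?_
      intro r hrbig hrnot
      by_contra h0
      have hm : (j, r) ∈ V.support := Finsupp.mem_support_iff.mpr h0
      have hw2 := hwin _ hm
      have hpar' : ((r : ℤ) : ZMod 2) = ξ j + 1 := hV1 _ hm
      have hξ := hbip i j hij ha
      refine hrnot ?_
      simp only [hR, Finset.mem_filter, Finset.mem_Icc]
      refine ⟨⟨by omega, by omega⟩, ?_⟩
      rw [hpar', hξ]
      exact char2 _
    have claimB : ∀ i, ∑ j, aC i j * (vtot j : ℤ) ≤ (w' i : ℤ) := by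
      intro i
      have h0 : 0 ≤ ∑ r ∈ R i, ((W (i, r) : ℤ) - (V (i, r + 1) : ℤ) - (V (i, r - 1) : ℤ)
          - ∑ j ∈ Finset.univ.erase i, aC i j * (V (j, r) : ℤ)) := by
        refine Finset.sum_nonneg fun r hr => ?_
        have hpar : ((r : ZMod 2) = ξ i) := by
          simp only [hR, Finset.mem_filter] at hr
          exact hr.2
        exact hV2 i r hpar
      rw [Finset.sum_sub_distrib, Finset.sum_sub_distrib, Finset.sum_sub_distrib] at h0
      have c1 : ∑ r ∈ R i, (W (i, r) : ℤ) = (w' i : ℤ) := by exact_mod_cast e1n i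
      have c2 : ∑ r ∈ R i, (V (i, r + 1) : ℤ) = (vtot i : ℤ) := by exact_mod_cast e2n i
      have c3 : ∑ r ∈ R i, (V (i, r - 1) : ℤ) = (vtot i : ℤ) := by exact_mod_cast e3n i
      have c4 : ∑ r ∈ R i, ∑ j ∈ Finset.univ.erase i, aC i j * (V (j, r) : ℤ)
          = ∑ j ∈ Finset.univ.erase i, aC i j * (vtot j : ℤ) := by
        rw [Finset.sum_comm]
        refine Finset.sum_congr rfl fun j hj => ?_
        rw [← Finset.mul_sum]
        rcases eq_or_ne (aC i j) 0 with h | h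
        · rw [h]; ring
        · have hji : j ≠ i := (Finset.mem_erase.mp hj).1
          have he := e4n i j (Ne.symm hji) h
          have he' : (∑ r ∈ R i, (V (j, r) : ℤ)) = (vtot j : ℤ) := by exact_mod_cast he
          rw [he']
      rw [c1, c2, c3, c4] at h0
      have hsplit : ∑ j, aC i j * (vtot j : ℤ)
          = aC i i * (vtot i : ℤ) + ∑ j ∈ Finset.univ.erase i, aC i j * (vtot j : ℤ) :=
        (Finset.add_sum_erase _ _ (Finset.mem_univ i)).symm
      rw [hsplit, hdiag i]
      linarith [h0]
    have hvB := hB vtot claimB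
    simp only [Set.mem_Icc]
    refine ⟨zero_le, ?_⟩
    rw [Finsupp.le_def]
    intro p
    obtain ⟨i, r⟩ := p
    by_cases hr : r ∈ bigSet
    · have h1 : V (i, r) ≤ vtot i := by
        have hle := Finset.single_le_sum (f := fun r => V (i, r))
          (fun _ _ => Nat.zero_le _) hr
        simpa [hvtot] using hle
      have h2 : N (i, r) = B := by
        rw [hN, Finsupp.indicator_apply]
        rw [dif_pos (Finset.mem_product.mpr ⟨Finset.mem_univ _, hr⟩)]
      rw [h2]
      exact le_trans h1 (hvB i)
    · have h1 : V (i, r) = 0 := by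
        by_contra h0
        have hm : (i, r) ∈ V.support := Finsupp.mem_support_iff.mpr h0
        have := hwin _ hm
        refine hr ?_
        simp only [hbigSet, Finset.mem_Icc]
        omega
      rw [h1]
      exact Nat.zero_le _
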